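/- arXiv:1907.11807 — 2 statements merged into one kernel-verified Lean document; each statement's English description precedes it below -/
import Mathlib

section
/- For every δ > 0, the function f_δ(x) = Σ_{λ∈ℤ} exp(-(x-λ)²/δ) is not constant on ℝ. -/
open Real Complex

lemma summable_aux {c : ℝ} (hc : 0 < c) :
    Summable fun n : ℤ => Real.exp (-c * (n : ℝ) ^ 2) := by
  apply Summable.of_nat_of_neg <;>
  · refine Summable.of_nonneg_of_le (fun n => (Real.exp_pos _).le)
      (f := fun n : ℕ => Real.exp (-c) ^ n) (fun n => ?_)
      (summable_geometric_of_lt_one (Real.exp_pos _).le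
        ((Real.exp_lt_one_iff).2 (by linarith)))
    show _ ≤ Real.exp (-c) ^ n
    rw [← Real.exp_nat_mul]
    apply Real.exp_le_exp.2
    have h1 : (n : ℝ) ≤ (n : ℝ) ^ 2 := by
      exact_mod_cast Nat.le_self_pow two_ne_zero n
    push_cast
    nlinarith [mul_le_mul_of_nonneg_left h1 hc.le]

/-- For every `δ > 0`, the function `f_δ(x) = ∑_{λ ∈ ℤ} exp(-(x-λ)²/δ)`
is not constant on `ℝ`. -/
theorem theta_not_constant (δ : ℝ) (hδ : 0 < δ) :
    ∃ x y : ℝ, (∑' l : ℤ, Real.exp (-(x - l) ^ 2 / δ)) ≠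
      (∑' l : ℤ, Real.exp (-(y - l) ^ 2 / δ)) := by
  refine ⟨0, 1/2, ?_⟩
  set a : ℝ := (π * δ)⁻¹ with ha_def
  have hπ : (0:ℝ) < π := Real.pi_pos
  have ha : 0 < a := inv_pos.2 (mul_pos hπ hδ)
  have haC : 0 < ((a:ℂ)).re := by simpa using ha
  have hδC : (δ:ℂ) ≠ 0 := Complex.ofReal_ne_zero.2 hδ.ne'
  have hπC : ((π:ℝ):ℂ) ≠ 0 := Complex.ofReal_ne_zero.2 hπ.ne'
  have hπa : ((π:ℂ)) * a = 1 / (δ:ℂ) := by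
    rw [ha_def]; push_cast; field_simp
  have haC' : (a:ℂ) ≠ 0 := Complex.ofReal_ne_zero.2 ha.ne'
  -- Claim A : value at 0
  have hA : (∑' l : ℤ, Real.exp (-((0:ℝ) - l) ^ 2 / δ))
      = 1 / a ^ ((1:ℝ)/2) * ∑' n : ℤ, Real.exp (-π / a * (n:ℝ) ^ 2) := by
    rw [← Real.tsum_exp_neg_mul_int_sq ha]
    refine tsum_congr fun n => ?_
    congr 1
    rw [ha_def]
    field_simp
    ring
  -- Claim B : value at 1/2
  have hB : (∑' l : ℤ, Real.exp (-((1/2:ℝ) - l) ^ 2 / δ))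
      = 1 / a ^ ((1:ℝ)/2) * ∑' n : ℤ, ((-1:ℝ) ^ n * Real.exp (-π / a * (n:ℝ) ^ 2)) := by
    have key := Complex.tsum_exp_neg_quadratic haC ((a:ℂ)/2)
    have h1 : ((∑' l : ℤ, Real.exp (-((1/2:ℝ) - l) ^ 2 / δ) : ℝ) : ℂ)
        = Complex.exp (-(1/(4*(δ:ℂ)))) *
          ∑' n : ℤ, Complex.exp (-(π:ℂ) * a * (n:ℂ) ^ 2 + 2 * π * ((a:ℂ)/2) * n) := by
      rw [Complex.ofReal_tsum, ← tsum_mul_left]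
      refine tsum_congr fun n => ?_
      rw [Complex.ofReal_exp, ← Complex.exp_add]
      congr 1
      have : -(π:ℂ) * a * (n:ℂ) ^ 2 + 2 * π * ((a:ℂ)/2) * n
          = -((π:ℂ)*a) * (n:ℂ)^2 + ((π:ℂ)*a) * n := by ring
      rw [this, hπa]
      push_cast
      field_simp
      ring
    have h2 : ∀ n : ℤ, Complex.exp (-(π:ℂ) / a * ((n:ℂ) + I * ((a:ℂ)/2)) ^ 2)
        = Complex.exp (1/(4*(δ:ℂ))) * (((-1:ℂ)) ^ n * Complex.exp (-(π:ℂ) / a * (n:ℂ) ^ 2)) := by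
      intro n
      have hm1 : Complex.exp (-((π:ℂ) * I)) = -1 := by
        rw [Complex.exp_neg, Complex.exp_pi_mul_I]; norm_num
      have hexp : Complex.exp ((n:ℂ) * (-((π:ℂ) * I))) = (-1:ℂ) ^ n := by
        rw [Complex.exp_int_mul, hm1]
      have harg : -(π:ℂ) / a * ((n:ℂ) + I * ((a:ℂ)/2)) ^ 2
          = 1/(4*(δ:ℂ)) + ((n:ℂ) * (-((π:ℂ) * I)) + -(π:ℂ) / a * (n:ℂ) ^ 2) := by
        have hI : (I:ℂ) ^ 2 = -1 := Complex.I_sq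
        have expand : -(π:ℂ) / a * ((n:ℂ) + I * ((a:ℂ)/2)) ^ 2
            = -(π:ℂ)/a * (n:ℂ)^2 + (n:ℂ) * (-((π:ℂ)*I)) + ((π:ℂ)*a)/4 := by
          field_simp
          ring_nf
          rw [hI]
          ring
        rw [expand, hπa]
        ring
      rw [harg, Complex.exp_add, Complex.exp_add, hexp]
    -- assemble in ℂ
    have hC : ((∑' l : ℤ, Real.exp (-((1/2:ℝ) - l) ^ 2 / δ) : ℝ) : ℂ)
        = 1 / (a:ℂ) ^ ((1:ℂ)/2) *
          ∑' n : ℤ, (((-1:ℂ)) ^ n * Complex.exp (-(π:ℂ) / a * (n:ℂ) ^ 2)) := by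
      rw [h1, key]
      simp_rw [h2]
      rw [tsum_mul_left]
      rw [← mul_assoc, ← mul_assoc]
      have hone : Complex.exp (-(1/(4*(δ:ℂ)))) * Complex.exp (1/(4*(δ:ℂ))) = 1 := by
        rw [← Complex.exp_add]; norm_num
      rw [show Complex.exp (-(1/(4*(δ:ℂ)))) * (1 / (a:ℂ) ^ ((1:ℂ)/2)) * Complex.exp (1/(4*(δ:ℂ)))
            = Complex.exp (-(1/(4*(δ:ℂ)))) * Complex.exp (1/(4*(δ:ℂ))) * (1 / (a:ℂ) ^ ((1:ℂ)/2)) from by ring,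
         hone, one_mul]
    -- de-complexify
    rw [← Complex.ofReal_inj]
    rw [hC]
    push_cast [Complex.ofReal_cpow ha.le]
    norm_num
  -- strict inequality between the two series
  have hS : Summable fun n : ℤ => Real.exp (-π / a * (n:ℝ) ^ 2) := by
    have := summable_aux (c := π / a) (div_pos hπ ha)
    simpa [neg_div] using this
  have hT : Summable fun n : ℤ => ((-1:ℝ) ^ n * Real.exp (-π / a * (n:ℝ) ^ 2)) := by
    refine Summable.of_norm_bounded hS fun n => ?_
    rw [norm_mul]
    rcases Int.even_or_odd n with h | h
    · rw [h.neg_one_zpow]; simp [Real.exp_pos]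
    · rw [h.neg_one_zpow]; simp [Real.exp_pos, abs_of_pos]
  have hlt : (∑' n : ℤ, ((-1:ℝ) ^ n * Real.exp (-π / a * (n:ℝ) ^ 2)))
      < ∑' n : ℤ, Real.exp (-π / a * (n:ℝ) ^ 2) := by
    refine Summable.tsum_lt_tsum (i := 1) (fun n => ?_) ?_ hT hS
    · rcases Int.even_or_odd n with h | h
      · rw [h.neg_one_zpow, one_mul]
      · rw [h.neg_one_zpow]
        nlinarith [Real.exp_pos (-π / a * (n:ℝ) ^ 2)]
    · norm_num
      positivity
  have hc : 0 < 1 / a ^ ((1:ℝ)/2) := by positivity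
  rw [hA, hB]
  exact ne_of_gt ((mul_lt_mul_iff_right₀ hc).2 hlt)
end

section
/- Let X be a random variable taking finitely many real values, with mean zero, symmetric distribution, and λ = min over the range of P[X = x] > 0. Then for every q ≥ 2 and all a, b ∈ ℝ, ‖a + ρbX‖_q ≤ ‖a + bX‖_2 where ρ = (1/√(q−1))·λ^{1/2 − 1/q}; i.e., X is (2, q, ρ)-hypercontractive. -/
open MeasureTheory Real

open Set

lemma DH_midpoint_rpow {p x y : ℝ} (hp0 : 0 ≤ p) (hp1 : p ≤ 1) (hx : 0 ≤ x) (hy : 0 ≤ y) :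
    x ^ p + y ^ p ≤ 2 * ((x + y) / 2) ^ p := by
  rcases eq_or_lt_of_le hp0 with h0 | h0
  · simp [← h0]; norm_num
  rcases eq_or_lt_of_le hp1 with h1 | h1
  · subst h1; rw [rpow_one, rpow_one, rpow_one]; linarith
  have hcc := (Real.strictConcaveOn_rpow h0 h1).concaveOn
  have h := hcc.2 (mem_Ici.2 hx) (mem_Ici.2 hy)
      (by norm_num : (0:ℝ) ≤ 1/2) (by norm_num : (0:ℝ) ≤ 1/2) (by norm_num)
  simp only [smul_eq_mul] at h
  have e : (1/2 : ℝ) * x + (1/2 : ℝ) * y = (x + y)/2 := by ring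
  rw [e] at h
  linarith

-- monotone helper
lemma DH_mono_aux {F F' : ℝ → ℝ}
    (hd : ∀ x ∈ Ioo (0:ℝ) 1, HasDerivAt F (F' x) x)
    (hc : ContinuousOn F (Icc 0 1))
    (h0 : ∀ x ∈ Ioo (0:ℝ) 1, 0 ≤ F' x) :
    ∀ t ∈ Icc (0:ℝ) 1, F 0 ≤ F t := by
  have hmono : MonotoneOn F (Icc 0 1) := by
    apply monotoneOn_of_deriv_nonneg (convex_Icc 0 1) hc
    · rw [interior_Icc]
      exact fun x hx => (hd x hx).differentiableAt.differentiableWithinAt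
    · rw [interior_Icc]
      intro x hx; rw [(hd x hx).deriv]; exact h0 x hx
  intro t ht
  exact hmono (left_mem_Icc.2 zero_le_one) ht ht.1

lemma DH_hasDeriv_plus {p : ℝ} {s : ℝ} (hs : (0:ℝ) < 1 + s) :
    HasDerivAt (fun x : ℝ => (1+x) ^ p) (p * (1+s)^(p-1)) s := by
  have h1 : HasDerivAt (fun x : ℝ => 1 + x) 1 s := (hasDerivAt_id s).const_add 1
  have h := h1.rpow_const (p := p) (Or.inl (ne_of_gt hs))
  simpa using h

lemma DH_hasDeriv_minus {p : ℝ} {s : ℝ} (h : (1:ℝ) - s ≠ 0 ∨ 1 ≤ p) :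
    HasDerivAt (fun x : ℝ => (1-x) ^ p) (-(p * (1-s)^(p-1))) s := by
  have h1 : HasDerivAt (fun x : ℝ => 1 - x) (-1) s := (hasDerivAt_id s).const_sub 1
  have h2 := h1.rpow_const (p := p) h
  convert h2 using 1
  ring

lemma DH_cont_plus {p : ℝ} (hp : 0 ≤ p) : ContinuousOn (fun x : ℝ => (1+x) ^ p) (Icc 0 1) :=
  (continuous_const.add continuous_id).continuousOn.rpow_const (fun _ _ => Or.inr hp)

lemma DH_cont_minus {p : ℝ} (hp : 0 ≤ p) : ContinuousOn (fun x : ℝ => (1-x) ^ p) (Icc 0 1) :=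
  (continuous_const.sub continuous_id).continuousOn.rpow_const (fun _ _ => Or.inr hp)

lemma DH_D3 {q : ℝ} (hq2 : 2 ≤ q) (hq3 : q ≤ 3) :
    ∀ s ∈ Icc (0:ℝ) 1, (1+s)^(q-1) - (1-s)^(q-1) ≤ 2*(q-1)*s := by
  have key := DH_mono_aux (F := fun s => 2*(q-1)*s - (1+s)^(q-1) + (1-s)^(q-1))
    (F' := fun s => 2*(q-1) - (q-1)*(1+s)^(q-2) - (q-1)*(1-s)^(q-2)) ?_ ?_ ?_
  · intro s hs
    have := key s hs
    simp only [mul_zero, zero_rpow, add_zero, sub_zero, zero_add, one_rpow] at this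
    -- F 0 = 0 - 1 + 1
    linarith [this]
  · intro x hx
    have h2 := DH_hasDeriv_plus (p := q-1) (s := x) (by linarith [hx.1])
    have h3 := DH_hasDeriv_minus (p := q-1) (s := x) (Or.inl (by
      have : (0:ℝ) < 1 - x := by linarith [hx.2]
      exact ne_of_gt this))
    have h1 : HasDerivAt (fun s : ℝ => 2*(q-1)*s) (2*(q-1)) x := by
      simpa using (hasDerivAt_id x).const_mul (2*(q-1))
    have h := (h1.sub h2).add h3
    have e : q - 1 - 1 = q - 2 := by ring
    rw [e] at h
    exact h.congr_deriv (by ring)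
  · apply ContinuousOn.add
    apply ContinuousOn.sub
    · exact (continuous_const.mul continuous_id).continuousOn
    · exact DH_cont_plus (by linarith)
    · exact DH_cont_minus (by linarith)
  · intro x hx
    have hx1 : (0:ℝ) ≤ 1 + x := by linarith [hx.1]
    have hx2 : (0:ℝ) ≤ 1 - x := by linarith [hx.2]
    have hm := DH_midpoint_rpow (p := q-2) (by linarith) (by linarith) hx1 hx2
    have e : ((1+x) + (1-x))/2 = 1 := by ring
    rw [e, one_rpow, mul_one] at hm
    nlinarith [hm]

lemma DH_D2 {q : ℝ} (hq : 3 ≤ q) :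
    ∀ s ∈ Icc (0:ℝ) 1,
      (1+s)^(q-1) - (1-s)^(q-1) ≤ (q-1)*s*((1+s)^(q-2) + (1-s)^(q-2)) := by
  have key := DH_mono_aux
    (F := fun s => (q-1)*s*((1+s)^(q-2) + (1-s)^(q-2)) - (1+s)^(q-1) + (1-s)^(q-1))
    (F' := fun s => (q-1)*(q-2)*s*((1+s)^(q-3) - (1-s)^(q-3))) ?_ ?_ ?_
  · intro s hs
    have := key s hs
    simp only [mul_zero, zero_mul, add_zero, zero_add, one_rpow, zero_sub, sub_zero] at this
    linarith [this]
  · intro x hx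
    have hp1 : (0:ℝ) < 1 + x := by linarith [hx.1]
    have hm1 : ((1:ℝ) - x) ≠ 0 := ne_of_gt (by linarith [hx.2])
    have hA3 := DH_hasDeriv_plus (p := q-2) (s := x) hp1
    have hB3 := DH_hasDeriv_minus (p := q-2) (s := x) (Or.inl hm1)
    have hA := DH_hasDeriv_plus (p := q-1) (s := x) hp1
    have hB := DH_hasDeriv_minus (p := q-1) (s := x) (Or.inl hm1)
    have hlin : HasDerivAt (fun s : ℝ => (q-1)*s) (q-1) x := by
      simpa using (hasDerivAt_id x).const_mul (q-1)
    have hu := hA3.add hB3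
    have hprod := hlin.mul hu
    have h := (hprod.sub hA).add hB
    have e1 : q - 2 - 1 = q - 3 := by ring
    have e2 : q - 1 - 1 = q - 2 := by ring
    rw [e1, e2] at h
    exact h.congr_deriv (by simp only [Pi.add_apply]; ring)
  · apply ContinuousOn.add
    apply ContinuousOn.sub
    · exact ((continuous_const.mul continuous_id).continuousOn).mul
        ((DH_cont_plus (by linarith)).add (DH_cont_minus (by linarith)))
    · exact DH_cont_plus (by linarith)
    · exact DH_cont_minus (by linarith)
  · intro x hx
    have hx1 : (0:ℝ) ≤ 1 - x := by linarith [hx.2]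
    have hle : (1-x)^(q-3) ≤ (1+x)^(q-3) :=
      rpow_le_rpow hx1 (by linarith [hx.1]) (by linarith)
    have h1 : (0:ℝ) ≤ (q-1)*(q-2)*x :=
      mul_nonneg (mul_nonneg (by linarith) (by linarith)) hx.1.le
    exact mul_nonneg h1 (by linarith)

lemma DH_sq_rpow {x : ℝ} (hx : 0 ≤ x) (r : ℝ) : (x^2)^(r/2) = x^r := by
  rw [← rpow_natCast x 2, ← rpow_mul hx]
  congr 1
  push_cast
  ring

lemma DH_H_small {q : ℝ} (hq : 2 ≤ q) (hq4 : q ≤ 4) :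
    ∀ s ∈ Icc (0:ℝ) 1, (1+s)^(q-2) + (1-s)^(q-2) ≤ 2*(1+(q-1)*s^2)^((q-2)/2) := by
  intro s hs
  have h1s : (0:ℝ) ≤ 1 + s := by linarith [hs.1]
  have h2s : (0:ℝ) ≤ 1 - s := by linarith [hs.2]
  have hm := DH_midpoint_rpow (p := (q-2)/2) (by linarith) (by linarith)
      (sq_nonneg (1+s)) (sq_nonneg (1-s))
  rw [DH_sq_rpow h1s, DH_sq_rpow h2s] at hm
  have e : ((1+s)^2 + (1-s)^2)/2 = 1 + s^2 := by ring
  rw [e] at hm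
  have hle : (1+s^2 : ℝ) ≤ 1+(q-1)*s^2 := by nlinarith [sq_nonneg s]
  have := rpow_le_rpow (by positivity) hle (by linarith : (0:ℝ) ≤ (q-2)/2)
  linarith

lemma DH_core_of_H {q : ℝ} (hq : 2 ≤ q)
    (H : ∀ s ∈ Icc (0:ℝ) 1, (1+s)^(q-2) + (1-s)^(q-2) ≤ 2*(1+(q-1)*s^2)^((q-2)/2)) :
    ∀ t ∈ Icc (0:ℝ) 1, (1+t)^q + (1-t)^q ≤ 2*(1+(q-1)*t^2)^(q/2) := by
  have key := DH_mono_aux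
    (F := fun s => 2*(1+(q-1)*s^2)^(q/2) - (1+s)^q - (1-s)^q)
    (F' := fun s => 2*(q*(q-1)*s*(1+(q-1)*s^2)^((q-2)/2)) - q*(1+s)^(q-1) + q*(1-s)^(q-1))
    ?_ ?_ ?_
  · intro t ht
    have := key t ht
    norm_num at this
    linarith [this]
  · intro x hx
    have hbase : (0:ℝ) < 1+(q-1)*x^2 := by nlinarith [sq_nonneg x, hx.1]
    have hin : HasDerivAt (fun s : ℝ => 1+(q-1)*s^2) ((q-1)*(2*x)) x := by
      have h := (hasDerivAt_pow 2 x).const_mul (q-1)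
      have h2 := h.const_add 1
      exact h2.congr_deriv (by norm_num)
    have hr := hin.rpow_const (p := q/2) (Or.inl (ne_of_gt hbase))
    have hr2 := hr.const_mul 2
    have hA := DH_hasDeriv_plus (p := q) (s := x) (by linarith [hx.1])
    have hB := DH_hasDeriv_minus (p := q) (s := x)
      (Or.inl (ne_of_gt (by linarith [hx.2] : (0:ℝ) < 1 - x)))
    have h := (hr2.sub hA).sub hB
    have e : q/2 - 1 = (q-2)/2 := by ring
    rw [e] at h
    exact h.congr_deriv (by ring)
  · apply ContinuousOn.sub
    apply ContinuousOn.sub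
    · apply ContinuousOn.mul continuousOn_const
      apply ContinuousOn.rpow_const
      · exact (continuous_const.add (continuous_const.mul (continuous_pow 2))).continuousOn
      · intro x _; right; linarith
    · exact DH_cont_plus (by linarith)
    · exact DH_cont_minus (by linarith)
  · intro x hx
    set R := (1+(q-1)*x^2)^((q-2)/2) with hR
    have hR1 : 1 ≤ R := by
      apply one_le_rpow _ (by linarith)
      nlinarith [sq_nonneg x]
    have hq0 : (0:ℝ) ≤ q := by linarith
    have hxx : (0:ℝ) ≤ x := hx.1.le
    rcases le_total q 3 with h3 | h3
    · have hD := DH_D3 hq h3 x ⟨hx.1.le, hx.2.le⟩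
      have h1 : q*((1+x)^(q-1) - (1-x)^(q-1)) ≤ q*(2*(q-1)*x) :=
        mul_le_mul_of_nonneg_left hD hq0
      have h2 : (q*(q-1)*x) * 1 ≤ (q*(q-1)*x) * R :=
        mul_le_mul_of_nonneg_left hR1
          (mul_nonneg (mul_nonneg hq0 (by linarith)) hxx)
      nlinarith [h1, h2]
    · have hD := DH_D2 h3 x ⟨hx.1.le, hx.2.le⟩
      have hH := H x ⟨hx.1.le, hx.2.le⟩
      have h1 : q*((1+x)^(q-1) - (1-x)^(q-1)) ≤ q*((q-1)*x*((1+x)^(q-2)+(1-x)^(q-2))) :=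
        mul_le_mul_of_nonneg_left hD hq0
      have h2 : (q*(q-1)*x)*((1+x)^(q-2)+(1-x)^(q-2)) ≤ (q*(q-1)*x)*(2*R) :=
        mul_le_mul_of_nonneg_left hH
          (mul_nonneg (mul_nonneg hq0 (by linarith)) hxx)
      nlinarith [h1, h2]

lemma DH_core_aux : ∀ n : ℕ, ∀ q : ℝ, 2 ≤ q → q ≤ 2*n + 4 →
    ∀ t ∈ Icc (0:ℝ) 1, (1+t)^q + (1-t)^q ≤ 2*(1+(q-1)*t^2)^(q/2) := by
  intro n
  induction n with
  | zero =>
    intro q hq hq4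
    exact DH_core_of_H hq (DH_H_small hq (by norm_num at hq4; linarith))
  | succ n ih =>
    intro q hq hq4
    rcases le_total q 4 with h4 | h4
    · exact DH_core_of_H hq (DH_H_small hq h4)
    · have hprev := ih (q-2) (by linarith) (by push_cast at hq4 ⊢; linarith)
      apply DH_core_of_H hq
      intro s hs
      have h := hprev s hs
      have hle : (1+(q-2-1)*s^2 : ℝ) ≤ 1+(q-1)*s^2 := by nlinarith [sq_nonneg s]
      have hpos : (0:ℝ) ≤ 1+(q-2-1)*s^2 := by nlinarith [sq_nonneg s]
      have := rpow_le_rpow hpos hle (by linarith : (0:ℝ) ≤ (q-2)/2)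
      linarith

lemma DH_core {q : ℝ} (hq : 2 ≤ q) :
    ∀ t ∈ Icc (0:ℝ) 1, (1+t)^q + (1-t)^q ≤ 2*(1+(q-1)*t^2)^(q/2) := by
  obtain ⟨n, hn⟩ := exists_nat_ge q
  exact DH_core_aux n q hq (by push_cast; linarith)

lemma DH_core_all {q : ℝ} (hq : 2 ≤ q) {t : ℝ} (ht : 0 ≤ t) :
    (1+t)^q + |1-t|^q ≤ 2*(1+(q-1)*t^2)^(q/2) := by
  rcases le_total t 1 with h | h
  · rw [abs_of_nonneg (by linarith)]
    exact DH_core hq t ⟨ht, h⟩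
  · have ht0 : (0:ℝ) < t := lt_of_lt_of_le one_pos h
    set s : ℝ := t⁻¹ with hs
    have hs0 : 0 ≤ s := by positivity
    have hs1 : s ≤ 1 := by
      rw [hs]
      exact inv_le_one_of_one_le₀ h
    have hcore := DH_core hq s ⟨hs0, hs1⟩
    have hts : t * s = 1 := mul_inv_cancel₀ (ne_of_gt ht0)
    have h1 : (1+t)^q = t^q * (1+s)^q := by
      rw [← mul_rpow ht0.le (by linarith)]
      congr 1
      rw [mul_add, mul_one, hts]
      ring
    have h2 : |1-t|^q = t^q * (1-s)^q := by
      have e1 : |1-t| = t - 1 := by rw [abs_of_nonpos (by linarith)]; ring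
      have e2 : t * (1-s) = t - 1 := by
        rw [mul_sub, hts, mul_one]
      rw [e1, ← e2, mul_rpow ht0.le (by nlinarith [hts])]
    have h3 : t^q * (2*(1+(q-1)*s^2)^(q/2)) = 2*((t^2*(1+(q-1)*s^2)))^(q/2) := by
      rw [mul_rpow (sq_nonneg t) (by nlinarith [sq_nonneg s]), DH_sq_rpow ht0.le]
      ring
    have h4 : t^2*(1+(q-1)*s^2) = t^2 + (q-1) := by
      have : t^2 * s^2 = 1 := by nlinarith [hts]
      nlinarith [this]
    have h5 : t^2 + (q-1) ≤ 1 + (q-1)*t^2 := by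
      have h7 : (0:ℝ) ≤ q - 2 := by linarith
      have h8 : (0:ℝ) ≤ t^2 - 1 := by nlinarith [h]
      nlinarith [mul_nonneg h7 h8]
    have h6 : (t^2+(q-1))^(q/2) ≤ (1+(q-1)*t^2)^(q/2) :=
      rpow_le_rpow (by nlinarith [sq_nonneg t]) h5 (by linarith)
    have hmul := mul_le_mul_of_nonneg_left hcore (rpow_nonneg ht0.le q)
    rw [mul_add, ← h1, ← h2] at hmul
    rw [h3, h4] at hmul
    linarith

lemma DH_bonami_nn {q : ℝ} (hq : 2 ≤ q) {a t : ℝ} (ha : 0 ≤ a) (ht : 0 ≤ t) :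
    |a + t|^q + |a - t|^q ≤ 2*(a^2 + (q-1)*t^2)^(q/2) := by
  rcases eq_or_lt_of_le ha with ha0 | ha0
  · -- a = 0
    rw [← ha0]
    simp only [zero_add, zero_sub, abs_neg, zero_pow, abs_of_nonneg ht]
    have e1 : t^q = (t^2)^(q/2) := (DH_sq_rpow ht q).symm
    have e2 : (t^2:ℝ) ≤ (q-1)*t^2 := by nlinarith [sq_nonneg t]
    have := rpow_le_rpow (sq_nonneg t) e2 (by linarith : (0:ℝ) ≤ q/2)
    have e3 : ((0:ℝ)^2 + (q-1)*t^2) = (q-1)*t^2 := by norm_num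
    rw [e3]
    rw [e1]
    linarith [this]
  · -- a > 0
    have hcore := DH_core_all hq (t := t/a) (by positivity)
    have haq : (0:ℝ) < a^q := rpow_pos_of_pos ha0 q
    have h1 : a^q * (1+t/a)^q = |a+t|^q := by
      rw [← mul_rpow ha0.le (by positivity)]
      congr 1
      rw [abs_of_nonneg (by positivity)]
      field_simp
    have h2 : a^q * |1-t/a|^q = |a-t|^q := by
      have : a^q = |a|^q := by rw [abs_of_nonneg ha0.le]
      rw [this, ← mul_rpow (abs_nonneg a) (abs_nonneg _), ← abs_mul]
      congr 2
      field_simp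
    have h3 : a^q * (2*(1+(q-1)*(t/a)^2)^(q/2)) = 2*(a^2+(q-1)*t^2)^(q/2) := by
      have hb : (0:ℝ) ≤ 1+(q-1)*(t/a)^2 := by nlinarith [sq_nonneg (t/a)]
      have key : (a^2)^(q/2) * (1+(q-1)*(t/a)^2)^(q/2) = (a^2+(q-1)*t^2)^(q/2) := by
        rw [← mul_rpow (sq_nonneg a) hb]
        congr 1
        field_simp
      rw [show a^q = (a^2)^(q/2) from (DH_sq_rpow ha0.le q).symm, ← key]
      ring
    have hmul := mul_le_mul_of_nonneg_left hcore haq.le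
    rw [mul_add, h1, h2, h3] at hmul
    exact hmul

lemma DH_bonami {q : ℝ} (hq : 2 ≤ q) (a t : ℝ) :
    |a + t|^q + |a - t|^q ≤ 2*(a^2 + (q-1)*t^2)^(q/2) := by
  rcases le_total 0 a with ha | ha <;> rcases le_total 0 t with ht | ht
  · exact DH_bonami_nn hq ha ht
  · have h := DH_bonami_nn hq ha (neg_nonneg.2 ht)
    rw [show a + -t = a - t from by ring, show a - -t = a + t from by ring,
        show (-t)^2 = t^2 from by ring] at h
    linarith
  · have h := DH_bonami_nn hq (neg_nonneg.2 ha) ht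
    rw [show -a + t = -(a - t) from by ring, show -a - t = -(a + t) from by ring,
        abs_neg, abs_neg, show (-a)^2 = a^2 from by ring] at h
    linarith
  · have h := DH_bonami_nn hq (neg_nonneg.2 ha) (neg_nonneg.2 ht)
    rw [show -a + -t = -(a + t) from by ring, show -a - -t = -(a - t) from by ring,
        abs_neg, abs_neg, show (-a)^2 = a^2 from by ring, show (-t)^2 = t^2 from by ring] at h
    linarith

lemma DH_rpow_combine {r x y M : ℝ} (hr : 1 ≤ r) (hx : 0 ≤ x) (hxy : x ≤ y) (hM : 0 ≤ M) :
    y ^ r + (x + M) ^ r ≤ x ^ r + (y + M) ^ r := by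
  have hy : 0 ≤ y := le_trans hx hxy
  rcases eq_or_lt_of_le (by linarith : x ≤ y + M) with hT | hT
  · -- x = y + M : forces x = y and M = 0
    have hxy' : x = y := le_antisymm hxy (by linarith)
    have hM0 : M = 0 := by linarith
    rw [hxy', hM0]
  · set T := y + M - x with hTdef
    have hT0 : 0 < T := by simp only [hTdef]; linarith
    set θ := M / T with hθdef
    have hθ0 : 0 ≤ θ := div_nonneg hM hT0.le
    have hθ1 : θ ≤ 1 := by
      rw [hθdef, div_le_one hT0]
      linarith
    have hcx : ConvexOn ℝ (Ici 0) fun z : ℝ => z ^ r := convexOn_rpow hr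
    have hmemx : x ∈ Ici (0:ℝ) := hx
    have hmemyM : y + M ∈ Ici (0:ℝ) := by simp only [mem_Ici]; linarith
    have h1 := hcx.2 hmemx hmemyM hθ0 (by linarith : (0:ℝ) ≤ 1 - θ) (by ring)
    have h2 := hcx.2 hmemx hmemyM (by linarith : (0:ℝ) ≤ 1 - θ) hθ0 (by ring)
    simp only [smul_eq_mul] at h1 h2
    have e1 : θ * x + (1 - θ) * (y + M) = y := by
      rw [hθdef]
      field_simp
      ring
    have e2 : (1 - θ) * x + θ * (y + M) = x + M := by
      rw [hθdef]
      field_simp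
      ring
    rw [e1] at h1
    rw [e2] at h2
    have e3 : θ * x ^ r + (1 - θ) * (y + M) ^ r + ((1 - θ) * x ^ r + θ * (y + M) ^ r)
        = x ^ r + (y + M) ^ r := by ring
    linarith

lemma DH_chord {r : ℝ} (hr : 1 ≤ r) {A c Y0 y : ℝ} (hA : 0 ≤ A) (hc : 0 ≤ c)
    (hY0 : 0 < Y0) (hy : 0 ≤ y) (hyY : y ≤ Y0) :
    (A + c*y)^r ≤ (1 - y/Y0) * A^r + (y/Y0) * (A + c*Y0)^r := by
  have hcx : ConvexOn ℝ (Ici 0) fun z : ℝ => z ^ r := convexOn_rpow hr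
  have hθ0 : 0 ≤ y / Y0 := div_nonneg hy hY0.le
  have hθ1 : y / Y0 ≤ 1 := by rw [div_le_one hY0]; exact hyY
  have h := hcx.2 (mem_Ici.2 hA) (by simp only [mem_Ici]; nlinarith : A + c*Y0 ∈ Ici (0:ℝ))
    (by linarith : (0:ℝ) ≤ 1 - y/Y0) hθ0 (by ring)
  simp only [smul_eq_mul] at h
  have e : (1 - y/Y0) * A + y/Y0 * (A + c*Y0) = A + c*y := by
    field_simp
    ring
  rw [e] at h
  exact h

lemma DH_scalar_final {q lam A M : ℝ} (hq : 2 ≤ q) (hlam0 : 0 < lam) (hlam1 : lam ≤ 1)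
    (hA : 0 ≤ A) (hM : 0 ≤ M) :
    (1-lam)*A^(q/2) + (lam^((2:ℝ)/q)*A + M)^(q/2) ≤ (A+M)^(q/2) := by
  have hq0 : (0:ℝ) < q := by linarith
  set u := lam^((2:ℝ)/q) with hu
  have hu0 : 0 ≤ u := rpow_nonneg hlam0.le _
  have hu1 : u ≤ 1 := rpow_le_one hlam0.le hlam1 (by positivity)
  have huq : u^(q/2) = lam := by
    rw [hu, ← rpow_mul hlam0.le]
    rw [show (2:ℝ)/q * (q/2) = 1 from by field_simp]
    exact rpow_one lam
  have hcomb := DH_rpow_combine (r := q/2) (x := u*A) (y := A)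
    (by linarith) (mul_nonneg hu0 hA) (by nlinarith) hM
  have hmulA : (u*A)^(q/2) = lam * A^(q/2) := by
    rw [mul_rpow hu0 hA, huq]
  rw [hmulA] at hcomb
  linarith


set_option maxHeartbeats 2000000 in
/-- A mean-zero, symmetric, finitely-valued random variable `X` with minimum point
probability `λ` is `(2,q,ρ)`-hypercontractive for `ρ = (q−1)^{-1/2} λ^{1/2−1/q}`. -/
theorem discrete_hypercontractivity
    {Ω : Type*} [MeasurableSpace Ω] (μ : Measure Ω) [IsProbabilityMeasure μ]
    (X : Ω → ℝ) (hX : Measurable X) (hfin : (Set.range X).Finite)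
    (hmean : ∫ ω, X ω ∂μ = 0)
    (hsym : Measure.map X μ = Measure.map (fun ω => -X ω) μ)
    (lam : ℝ) (hlam0 : 0 < lam)
    (hlam : IsLeast {r : ℝ | ∃ x ∈ Set.range X, r = (μ (X ⁻¹' {x})).toReal} lam)
    (q : ℝ) (hq : 2 ≤ q) (a b : ℝ) :
    (∫ ω, |a + (1 / Real.sqrt (q - 1) * lam ^ ((1:ℝ)/2 - 1/q)) * b * X ω| ^ q ∂μ)
        ^ (1/q)
      ≤ (∫ ω, (a + b * X ω) ^ 2 ∂μ) ^ ((1:ℝ)/2) := by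
  have hq0 : (0:ℝ) < q := by linarith
  have hq1 : (0:ℝ) < q - 1 := by linarith
  set ρ : ℝ := 1 / Real.sqrt (q - 1) * lam ^ ((1:ℝ)/2 - 1/q) with hρ
  set c : ℝ := lam ^ ((1:ℝ) - 2/q) with hc
  have hcnn : 0 ≤ c := rpow_nonneg hlam0.le _
  -- integrability of compositions with X
  have hint : ∀ φ : ℝ → ℝ, Continuous φ → Integrable (fun ω => φ (X ω)) μ := by
    intro φ hφ
    obtain ⟨D, hD⟩ := (hfin.image fun y => |φ y|).bddAbove
    refine ⟨(hφ.measurable.comp hX).aestronglyMeasurable, ?_⟩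
    apply HasFiniteIntegral.of_bounded (C := D)
    filter_upwards with ω
    have := hD (Set.mem_image_of_mem _ (Set.mem_range_self ω))
    simpa [Real.norm_eq_abs] using this
  have hIX : Integrable X μ := by
    simpa using hint id continuous_id
  have hIX2 : Integrable (fun ω => (X ω)^2) μ := hint (fun x => x^2) (continuous_pow 2)
  set σ2 : ℝ := ∫ ω, (X ω)^2 ∂μ with hσ2
  have hσ2nn : 0 ≤ σ2 := integral_nonneg fun ω => sq_nonneg _
  -- pointwise min-probability bound
  have hpt : ∀ ω, lam * (X ω)^2 ≤ σ2 := by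
    intro ω
    have hxr : X ω ∈ Set.range X := Set.mem_range_self ω
    have hplam : lam ≤ (μ (X ⁻¹' {X ω})).toReal := hlam.2 ⟨X ω, hxr, rfl⟩
    have hs : MeasurableSet (X ⁻¹' {X ω}) := hX (measurableSet_singleton (X ω))
    have h1 : ∫ ω' in X ⁻¹' {X ω}, (X ω')^2 ∂μ = (X ω)^2 * (μ (X ⁻¹' {X ω})).toReal := by
      rw [setIntegral_congr_fun hs (g := fun _ => (X ω)^2) (fun ω' h => by
        rw [Set.mem_preimage, Set.mem_singleton_iff] at h; rw [h])]
      rw [setIntegral_const, smul_eq_mul]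
      rw [mul_comm]; rfl
    have h2 : ∫ ω' in X ⁻¹' {X ω}, (X ω')^2 ∂μ ≤ σ2 :=
      setIntegral_le_integral hIX2 (Filter.Eventually.of_forall fun ω' => sq_nonneg _)
    nlinarith [mul_le_mul_of_nonneg_right hplam (sq_nonneg (X ω))]
  have hlam1 : lam ≤ 1 := by
    obtain ⟨x, hxr, hxe⟩ := hlam.1
    have hμ : μ (X ⁻¹' {x}) ≤ 1 := prob_le_one
    have := ENNReal.toReal_mono ENNReal.one_ne_top hμ
    simpa using hxe ▸ this
  -- variance expansion
  have hg2 : ∫ ω, (a + b * X ω)^2 ∂μ = a^2 + b^2*σ2 := by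
    have expand : (fun ω => (a + b*X ω)^2)
        = fun ω => a^2 + ((2*a*b)*X ω + b^2*(X ω)^2) := by
      funext ω; ring
    have hIlin : Integrable (fun ω => 2*a*b*X ω + b^2*X ω^2) μ :=
      (hIX.const_mul _).add (hIX2.const_mul _)
    rw [expand, integral_add (integrable_const _) hIlin,
        integral_add (hIX.const_mul _) (hIX2.const_mul _),
        integral_const_mul, integral_const_mul, hmean, integral_const]
    simp [measure_univ]
    exact Or.inl rfl
  -- rho algebra
  have hh1 : (lam ^ ((1:ℝ)/2 - 1/q))^(2:ℕ) = lam ^ ((1:ℝ) - 2/q) := by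
    rw [← rpow_natCast (lam ^ ((1:ℝ)/2 - 1/q)) 2, ← rpow_mul hlam0.le]
    congr 1
    push_cast
    ring
  have hh2 : (Real.sqrt (q-1))^(2:ℕ) = q - 1 := Real.sq_sqrt hq1.le
  have hρ2 : (q-1) * ρ^2 = c := by
    rw [hρ, hc, mul_pow, div_pow, one_pow, hh2, hh1]
    field_simp
  -- continuity of integrands
  have hcontp : Continuous (fun x : ℝ => |a + ρ * b * x| ^ q) :=
    ((continuous_const.add ((continuous_const.mul continuous_id))).abs).rpow_const
      fun x => Or.inr hq0.le
  have hcontm : Continuous (fun x : ℝ => |a - ρ * b * x| ^ q) :=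
    ((continuous_const.sub ((continuous_const.mul continuous_id))).abs).rpow_const
      fun x => Or.inr hq0.le
  have hcontψ : Continuous (fun x : ℝ => (a^2 + c*(b*x)^2) ^ (q/2)) := by
    apply Continuous.rpow_const
    · exact continuous_const.add (continuous_const.mul ((continuous_const.mul continuous_id).pow 2))
    · exact fun x => Or.inr (by positivity)
  -- symmetry
  have hsymInt : ∀ φ : ℝ → ℝ, Continuous φ →
      ∫ ω, φ (X ω) ∂μ = ∫ ω, φ (-(X ω)) ∂μ := by
    intro φ hφ
    rw [← integral_map hX.aemeasurable hφ.measurable.aestronglyMeasurable, hsym,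
        integral_map (by exact hX.neg.aemeasurable : AEMeasurable (fun ω => -X ω) μ) hφ.measurable.aestronglyMeasurable]
  have hflip : ∫ ω, |a - ρ*b*X ω|^q ∂μ = ∫ ω, |a + ρ*b*X ω|^q ∂μ := by
    have h := hsymInt (fun x => |a + ρ*b*x|^q) hcontp
    have e : (fun ω => |a - ρ*b*X ω|^q) = (fun ω => |a + ρ*b*(-(X ω))|^q) := by
      funext ω
      rw [show a + ρ*b*(-(X ω)) = a - ρ*b*X ω from by ring]
    rw [e]
    exact h.symm
  -- Bonami pointwise
  have hBon : ∀ ω, |a + ρ*b*X ω|^q + |a - ρ*b*X ω|^q ≤ 2*(a^2 + c*(b*X ω)^2)^(q/2) := by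
    intro ω
    have h := DH_bonami hq a (ρ*b*X ω)
    rw [show a^2 + (q-1)*(ρ*b*X ω)^2 = a^2 + c*(b*X ω)^2 from by rw [← hρ2]; ring] at h
    exact h
  have hIf : Integrable (fun ω => |a + ρ*b*X ω|^q) μ := hint _ hcontp
  have hIfm : Integrable (fun ω => |a - ρ*b*X ω|^q) μ := hint _ hcontm
  have hIψ : Integrable (fun ω => (a^2+c*(b*X ω)^2)^(q/2)) μ := hint _ hcontψ
  have hI1 : ∫ ω, |a + ρ*b*X ω|^q ∂μ ≤ ∫ ω, (a^2+c*(b*X ω)^2)^(q/2) ∂μ := by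
    have hIsum : Integrable (fun ω => |a + ρ*b*X ω|^q + |a - ρ*b*X ω|^q) μ := hIf.add hIfm
    have hI2ψ : Integrable (fun ω => 2*(a^2+c*(b*X ω)^2)^(q/2)) μ := hIψ.const_mul 2
    have hmono := integral_mono hIsum hI2ψ (fun ω => hBon ω)
    rw [integral_add hIf hIfm, integral_const_mul, hflip] at hmono
    linarith
  -- chord step
  have hI2 : ∫ ω, (a^2+c*(b*X ω)^2)^(q/2) ∂μ ≤ (a^2 + b^2*σ2)^(q/2) := by
    by_cases hM0 : b^2*σ2 = 0
    · have hzero : ∀ ω, (b*X ω)^2 = 0 := by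
        intro ω
        have h := hpt ω
        have h2 : b^2 * (lam * (X ω)^2) ≤ b^2*σ2 :=
          mul_le_mul_of_nonneg_left h (sq_nonneg b)
        have h3 : (b*X ω)^2 ≤ 0 := by nlinarith [sq_nonneg (b*X ω), sq_nonneg (X ω)]
        exact le_antisymm h3 (sq_nonneg _)
      have heq : (fun ω => (a^2+c*(b*X ω)^2)^(q/2)) = fun _ => (a^2:ℝ)^(q/2) := by
        funext ω
        rw [hzero ω, mul_zero, add_zero]
      rw [heq, integral_const, probReal_univ]
      rw [hM0, add_zero]
      simp
    · have hMpos : 0 < b^2*σ2 :=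
        lt_of_le_of_ne (mul_nonneg (sq_nonneg b) hσ2nn) (Ne.symm hM0)
      set Y0 : ℝ := b^2*σ2/lam with hY0def
      have hY0 : 0 < Y0 := div_pos hMpos hlam0
      set P : ℝ := (a^2:ℝ)^(q/2) with hP
      set Q : ℝ := (a^2 + c*Y0)^(q/2) with hQ
      have hch2 : ∀ ω, (a^2+c*(b*X ω)^2)^(q/2)
          ≤ P + ((Q - P)*b^2/Y0)*(X ω)^2 := by
        intro ω
        have hyY : (b*X ω)^2 ≤ Y0 := by
          rw [hY0def, le_div_iff₀ hlam0]
          nlinarith [mul_le_mul_of_nonneg_left (hpt ω) (sq_nonneg b)]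
        have h := DH_chord (by linarith : (1:ℝ) ≤ q/2) (sq_nonneg a) hcnn hY0
          (sq_nonneg (b*X ω)) hyY
        calc (a^2+c*(b*X ω)^2)^(q/2)
            ≤ (1 - (b*X ω)^2/Y0) * P + ((b*X ω)^2/Y0) * Q := h
          _ = P + ((Q - P)*b^2/Y0)*(X ω)^2 := by ring
      have hRint : Integrable (fun ω => P + ((Q - P)*b^2/Y0)*(X ω)^2) μ :=
        (integrable_const _).add (hIX2.const_mul _)
      have hmono := integral_mono hIψ hRint (fun ω => hch2 ω)
      rw [integral_add (integrable_const _) (hIX2.const_mul _),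
          integral_const_mul, integral_const, probReal_univ] at hmono
      simp only [ENNReal.toReal_one, smul_eq_mul, one_mul] at hmono
      have hYσ : ((Q - P)*b^2/Y0)*σ2 = (Q - P)*lam := by
        rw [hY0def]
        have hb : b ≠ 0 := by rintro rfl; simp at hMpos
        have hσ : σ2 ≠ 0 := by intro h0; rw [h0] at hMpos; simp at hMpos
        field_simp
      rw [← hσ2, hYσ] at hmono
      -- now: ∫ ψ ≤ P + (Q-P)*lam = (1-lam)*P + lam*Q
      have hkey : lam * Q = (lam^((2:ℝ)/q)*a^2 + b^2*σ2)^(q/2) := by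
        have huc : lam^((2:ℝ)/q) * c = lam := by
          rw [hc, ← rpow_add hlam0, show (2:ℝ)/q + (1 - 2/q) = 1 from by ring, rpow_one]
        have h1 : lam^((2:ℝ)/q) * (a^2 + c*Y0) = lam^((2:ℝ)/q)*a^2 + b^2*σ2 := by
          rw [mul_add, show lam^((2:ℝ)/q) * (c*Y0) = (lam^((2:ℝ)/q)*c)*Y0 from by ring,
              huc, hY0def]
          field_simp
        have hbase : (0:ℝ) ≤ a^2 + c*Y0 := by
          have := mul_nonneg hcnn hY0.le
          nlinarith [sq_nonneg a]
        calc lam * Q = (lam^((2:ℝ)/q))^(q/2) * (a^2+c*Y0)^(q/2) := by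
              rw [← rpow_mul hlam0.le, show (2:ℝ)/q*(q/2) = 1 from by field_simp, rpow_one, hQ]
          _ = (lam^((2:ℝ)/q) * (a^2+c*Y0))^(q/2) :=
              (mul_rpow (rpow_nonneg hlam0.le _) hbase).symm
          _ = (lam^((2:ℝ)/q)*a^2 + b^2*σ2)^(q/2) := by rw [h1]
      have hfin2 := DH_scalar_final (A := a^2) (M := b^2*σ2) hq hlam0 hlam1
        (sq_nonneg a) (mul_nonneg (sq_nonneg b) hσ2nn)
      rw [← hkey] at hfin2
      -- hfin2 : (1-lam)*P + lam*Q ≤ (a^2+b^2σ2)^(q/2)  (with P = (a^2)^(q/2))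
      calc ∫ ω, (a^2+c*(b*X ω)^2)^(q/2) ∂μ ≤ P + (Q - P)*lam := hmono
        _ = (1-lam)*(a^2)^(q/2) + lam*Q := by rw [hP]; ring
        _ ≤ (a^2 + b^2*σ2)^(q/2) := hfin2
  -- conclude
  have hL := le_trans hI1 hI2
  have hInn : 0 ≤ ∫ ω, (a + b*X ω)^2 ∂μ := integral_nonneg fun ω => sq_nonneg _
  have hLnn : 0 ≤ ∫ ω, |a + ρ*b*X ω|^q ∂μ :=
    integral_nonneg fun ω => rpow_nonneg (abs_nonneg _) _
  rw [← hg2] at hL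
  have hfinal := rpow_le_rpow hLnn hL (by positivity : (0:ℝ) ≤ 1/q)
  have hqne : q ≠ 0 := ne_of_gt hq0
  have hhalf : q/2*((1:ℝ)/q) = 1/2 := by
    field_simp
  rw [← rpow_mul hInn, hhalf] at hfinal
  exact hfinal
end
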